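/- Suppose f : ℝ^d → ℝ is L_f-smooth and g : ℝ^d → ℝ ∪ {+∞} is proper, lower semicontinuous and ρ-weakly convex, and let D := {x ∈ ℝ^d : g(x) < +∞} (which is convex). Let (u^k) be a sequence in ℝ^d with u^k → ū, and let (γ_k) be a sequence with γ_k ∈ (0, 1/ρ) and γ_k → 0. For each k let y^k be the unique minimizer over y ∈ ℝ^d of g(y) + (1/(2γ_k))‖y − (u^k − γ_k ∇f(u^k))‖². Then y^k converges to the unique nearest point of the closure of D to ū, i.e., y^k → p where p ∈ cl(D) and ‖ū − p‖ ≤ ‖ū − w‖ for every w ∈ cl(D). -/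

import Mathlib

set_option maxHeartbeats 1000000

open scoped RealInnerProductSpace
open Filter

private lemma ereal_eq_coe {a : EReal} (h1 : a ≠ ⊥) (h2 : a ≠ ⊤) :
    ∃ r : ℝ, a = (r : EReal) := ⟨a.toReal, (EReal.coe_toReal h2 h1).symm⟩

private lemma lsc_bdd_below {E : Type*} [NormedAddCommGroup E] (h : E → EReal)
    (hl : LowerSemicontinuous h) (hb : ∀ x, h x ≠ ⊥) {s : Set E} (hs : IsCompact s) :
    ∃ c : ℝ, ∀ x ∈ s, (c : EReal) ≤ h x := by
  have hr : ∀ x : E, ∃ r : ℝ, (r : EReal) < h x := by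
    intro x
    obtain ⟨r, _, hr2⟩ := EReal.exists_between_coe_real (Ne.bot_lt (hb x))
    exact ⟨r, hr2⟩
  choose r hrlt using hr
  have hcov : ∀ x ∈ s, h ⁻¹' (Set.Ioi (r x : EReal)) ∈ nhds x := by
    intro x _
    exact (lowerSemicontinuous_iff_isOpen_preimage.1 hl (r x)).mem_nhds (hrlt x)
  obtain ⟨t, hcover⟩ := hs.elim_nhds_subcover' (fun x _ => h ⁻¹' (Set.Ioi (r x : EReal))) hcov
  rcases t.eq_empty_or_nonempty with ht | ht
  · refine ⟨0, fun x hx => ?_⟩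
    have := hcover hx
    simp [ht] at this
  · refine ⟨t.inf' ht (fun x => r x.1), fun x hx => ?_⟩
    obtain ⟨i, hi, hxi⟩ := Set.mem_iUnion₂.1 (hcover hx)
    calc ((t.inf' ht fun x => r x.1 : ℝ) : EReal) ≤ (r i.1 : EReal) := by
          exact_mod_cast EReal.coe_le_coe_iff.2 (Finset.inf'_le _ hi)
      _ ≤ h x := le_of_lt hxi

private lemma quad_scale {γ A B R S : ℝ} (hγ : 0 < γ)
    (h : A + 1/(2*γ)*R ≤ B + 1/(2*γ)*S) : R ≤ S + 2*γ*(B-A) := by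
  have h2 : (0:ℝ) < 2*γ := by linarith
  have h3 := mul_le_mul_of_nonneg_left h h2.le
  rw [mul_add, mul_add, ← mul_assoc, ← mul_assoc, mul_one_div, div_self (ne_of_gt h2)] at h3
  nlinarith

private lemma self_le_of_sq_le {s a b : ℝ} (hs : 0 ≤ s) (ha : 0 ≤ a) (hb : 0 ≤ b)
    (h : s^2 ≤ a + b*s) : s ≤ a + b + 1 := by
  by_contra hc
  push_neg at hc
  nlinarith

/-- `g` is `ρ`-weakly convex: `g + (ρ/2)‖·‖²` is convex (extended-real-valued version). -/
def WeaklyConvexE {E : Type*} [NormedAddCommGroup E] [InnerProductSpace ℝ E]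
    (ρ : ℝ) (g : E → EReal) : Prop :=
  ∀ x y : E, ∀ t : ℝ, 0 ≤ t → t ≤ 1 →
    g (t • x + (1 - t) • y) + (((ρ / 2) * ‖t • x + (1 - t) • y‖ ^ 2 : ℝ) : EReal) ≤
      (t : EReal) * (g x + (((ρ / 2) * ‖x‖ ^ 2 : ℝ) : EReal)) +
        ((1 - t : ℝ) : EReal) * (g y + (((ρ / 2) * ‖y‖ ^ 2 : ℝ) : EReal))

theorem fb_map_tendsto_projection
    {E : Type*} [NormedAddCommGroup E] [InnerProductSpace ℝ E] [FiniteDimensional ℝ E]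
    (f : E → ℝ) (g : E → EReal) (Lf ρ : ℝ)
    (hLf : 0 ≤ Lf) (hρ : 0 ≤ ρ)
    (hfd : Differentiable ℝ f)
    (hflip : ∀ x y : E, ‖gradient f x - gradient f y‖ ≤ Lf * ‖x - y‖)
    (hgtop : ∃ x, g x ≠ ⊤) (hgbot : ∀ x, g x ≠ ⊥)
    (hglsc : LowerSemicontinuous g)
    (hwc : WeaklyConvexE ρ g)
    (u : ℕ → E) (ubar : E) (hu : Tendsto u atTop (nhds ubar))
    (γ : ℕ → ℝ) (hγpos : ∀ k, 0 < γ k) (hγρ : ∀ k, γ k * ρ < 1)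
    (hγ0 : Tendsto γ atTop (nhds 0))
    (y : ℕ → E)
    (hy : ∀ k, ∀ z : E,
      g (y k) + ((1 / (2 * γ k) *
        ‖y k - (u k - γ k • gradient f (u k))‖ ^ 2 : ℝ) : EReal) ≤
      g z + ((1 / (2 * γ k) *
        ‖z - (u k - γ k • gradient f (u k))‖ ^ 2 : ℝ) : EReal)) :
    ∃ p : E, p ∈ closure {x : E | g x ≠ ⊤} ∧
      (∀ w ∈ closure {x : E | g x ≠ ⊤}, ‖ubar - p‖ ≤ ‖ubar - w‖) ∧
      Tendsto y atTop (nhds p) := by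
  classical
  obtain ⟨z0, hz0D⟩ := hgtop
  obtain ⟨B0, hB0⟩ := ereal_eq_coe (hgbot z0) hz0D
  -- the minorant of the weakly convex function
  obtain ⟨K, hK0, hminor⟩ : ∃ K : ℝ, 0 ≤ K ∧ ∀ (v : E) (A : ℝ), g v = (A : EReal) →
      -(K * (1 + ‖v - z0‖)) ≤ A + ρ / 2 * ‖v‖ ^ 2 := by
    have hhlsc : LowerSemicontinuous (fun x : E => g x + (((ρ / 2) * ‖x‖ ^ 2 : ℝ) : EReal)) := by
      apply hglsc.add'
      · exact (continuous_coe_real_ereal.comp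
          (continuous_const.mul ((continuous_norm).pow 2))).lowerSemicontinuous
      · intro x
        apply EReal.continuousAt_add
        · right; exact EReal.coe_ne_bot _
        · right; exact EReal.coe_ne_top _
    have hhbot : ∀ x : E, (fun x : E => g x + (((ρ / 2) * ‖x‖ ^ 2 : ℝ) : EReal)) x ≠ ⊥ := by
      intro x hx
      rcases EReal.add_eq_bot_iff.1 hx with h1 | h1
      · exact hgbot x h1
      · exact EReal.coe_ne_bot _ h1
    obtain ⟨c, hc⟩ := lsc_bdd_below _ hhlsc hhbot (isCompact_closedBall z0 1)
    refine ⟨|c| + |B0 + ρ / 2 * ‖z0‖ ^ 2|, by positivity, ?_⟩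
    intro v A hA
    rcases le_or_gt ‖v - z0‖ 1 with hle | hgt
    · have hv : v ∈ Metric.closedBall z0 1 := by rwa [Metric.mem_closedBall, dist_eq_norm]
      have h2 := hc v hv
      rw [hA, ← EReal.coe_add] at h2
      have h3 : c ≤ A + ρ / 2 * ‖v‖ ^ 2 := EReal.coe_le_coe_iff.1 h2
      have h4 : 0 ≤ ‖v - z0‖ := norm_nonneg _
      nlinarith [neg_abs_le c, abs_nonneg (B0 + ρ / 2 * ‖z0‖ ^ 2), abs_nonneg c]
    · have hs0 : (0:ℝ) < ‖v - z0‖ := by linarith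
      have ht0 : 0 < 1 / ‖v - z0‖ := by positivity
      have ht1 : 1 / ‖v - z0‖ ≤ 1 := by rw [div_le_one hs0]; linarith
      have h1 := hwc v z0 (1 / ‖v - z0‖) ht0.le ht1
      have hpt : (1 / ‖v - z0‖) • v + (1 - 1 / ‖v - z0‖) • z0 ∈ Metric.closedBall z0 1 := by
        rw [Metric.mem_closedBall, dist_eq_norm]
        have he : (1 / ‖v - z0‖) • v + (1 - 1 / ‖v - z0‖) • z0 - z0
            = (1 / ‖v - z0‖) • (v - z0) := by module
        rw [he, norm_smul, Real.norm_eq_abs, abs_of_pos ht0, one_div,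
          inv_mul_cancel₀ (ne_of_gt hs0)]
      have h2 := (hc _ hpt).trans h1
      rw [hA, hB0, ← EReal.coe_add, ← EReal.coe_mul, ← EReal.coe_add, ← EReal.coe_mul,
        ← EReal.coe_add] at h2
      have h3 : c ≤ 1 / ‖v - z0‖ * (A + ρ / 2 * ‖v‖ ^ 2)
          + (1 - 1 / ‖v - z0‖) * (B0 + ρ / 2 * ‖z0‖ ^ 2) := EReal.coe_le_coe_iff.1 h2
      have hst : ‖v - z0‖ * (1 / ‖v - z0‖) = 1 := by field_simp
      have h4 : ‖v - z0‖ * c ≤ (A + ρ / 2 * ‖v‖ ^ 2)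
          + (‖v - z0‖ - 1) * (B0 + ρ / 2 * ‖z0‖ ^ 2) := by
        have h5 := mul_le_mul_of_nonneg_left h3 hs0.le
        have h6 : ‖v - z0‖ * (1 / ‖v - z0‖ * (A + ρ / 2 * ‖v‖ ^ 2)
            + (1 - 1 / ‖v - z0‖) * (B0 + ρ / 2 * ‖z0‖ ^ 2))
            = (‖v - z0‖ * (1 / ‖v - z0‖)) * (A + ρ / 2 * ‖v‖ ^ 2)
              + (‖v - z0‖ - ‖v - z0‖ * (1 / ‖v - z0‖)) * (B0 + ρ / 2 * ‖z0‖ ^ 2) := by ring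
        rw [h6, hst] at h5
        linarith
      have h7 := mul_le_mul_of_nonneg_left (neg_abs_le c) hs0.le
      have h8 := mul_le_mul_of_nonneg_right (le_abs_self (B0 + ρ / 2 * ‖z0‖ ^ 2))
        (by linarith : (0:ℝ) ≤ ‖v - z0‖ - 1)
      nlinarith [abs_nonneg c, abs_nonneg (B0 + ρ / 2 * ‖z0‖ ^ 2)]
  -- convexity of the domain
  have hDconv : Convex ℝ {x : E | g x ≠ ⊤} := by
    intro x hx z hz a b ha hb hab
    obtain ⟨A, hA⟩ := ereal_eq_coe (hgbot x) hx
    obtain ⟨B, hB⟩ := ereal_eq_coe (hgbot z) hz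
    have h1 := hwc x z a ha (by linarith)
    have hb' : b = 1 - a := by linarith
    subst hb'
    rw [hA, hB, ← EReal.coe_add, ← EReal.coe_mul, ← EReal.coe_add, ← EReal.coe_mul,
      ← EReal.coe_add] at h1
    simp only [Set.mem_setOf_eq]
    intro htop
    rw [htop, EReal.top_add_coe] at h1
    exact (EReal.coe_lt_top _).not_ge h1
  -- the forward step map
  obtain ⟨w, hwdef⟩ : ∃ w : ℕ → E, w = fun k => u k - γ k • gradient f (u k) := ⟨_, rfl⟩
  have hy' : ∀ k, ∀ z : E,
      g (y k) + ((1 / (2 * γ k) * ‖y k - w k‖ ^ 2 : ℝ) : EReal) ≤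
      g z + ((1 / (2 * γ k) * ‖z - w k‖ ^ 2 : ℝ) : EReal) := by
    intro k z
    simp only [hwdef]
    exact hy k z
  have hwten : Tendsto w atTop (nhds ubar) := by
    rw [hwdef]
    have hgradt : Tendsto (fun k => gradient f (u k)) atTop (nhds (gradient f ubar)) := by
      rw [tendsto_iff_norm_sub_tendsto_zero]
      apply squeeze_zero (fun k => norm_nonneg _) (fun k => hflip (u k) ubar)
      have h2 : Tendsto (fun k => ‖u k - ubar‖) atTop (nhds 0) :=
        tendsto_iff_norm_sub_tendsto_zero.1 hu
      simpa using h2.const_mul Lf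
    have h3 := hu.sub (hγ0.smul hgradt)
    simpa using h3
  clear hy hu
  have hwsmall : ∀ ε : ℝ, 0 < ε → ∀ᶠ k in atTop, ‖w k - ubar‖ < ε := by
    intro ε hε
    exact (tendsto_iff_norm_sub_tendsto_zero.1 hwten).eventually_lt_const hε
  have hγsmall : ∀ ε : ℝ, 0 < ε → ∀ᶠ k in atTop, γ k < ε := fun ε hε =>
    hγ0.eventually_lt_const hε
  -- key inequality, in the reals
  have hkey : ∀ k, ∀ (z : E) (B : ℝ), g z = (B : EReal) →
      ∃ A : ℝ, g (y k) = (A : EReal) ∧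
        ‖y k - w k‖ ^ 2 ≤ ‖z - w k‖ ^ 2 + 2 * γ k * (B - A) := by
    intro k z B hB
    have h1 := hy' k z
    rw [hB, ← EReal.coe_add] at h1
    have hytop : g (y k) ≠ ⊤ := by
      intro htop
      rw [htop, EReal.top_add_coe] at h1
      exact (EReal.coe_lt_top _).not_ge h1
    obtain ⟨A, hA⟩ := ereal_eq_coe (hgbot _) hytop
    rw [hA, ← EReal.coe_add] at h1
    exact ⟨A, hA, quad_scale (hγpos k) (EReal.coe_le_coe_iff.1 h1)⟩
  have hyD : ∀ k, y k ∈ {x : E | g x ≠ ⊤} := by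
    intro k
    obtain ⟨A, hA, _⟩ := hkey k z0 B0 hB0
    simp [Set.mem_setOf_eq, hA]
  -- constants
  obtain ⟨M1, hM1⟩ : ∃ M1 : ℝ, M1 = ‖ubar - z0‖ + 1 := ⟨_, rfl⟩
  obtain ⟨M2, hM2⟩ : ∃ M2 : ℝ, M2 = ‖ubar‖ + 1 := ⟨_, rfl⟩
  have hM1pos : 0 < M1 := by rw [hM1]; positivity
  have hM2pos : 0 < M2 := by rw [hM2]; positivity
  -- triangle estimates, valid whenever ‖w k - ubar‖ ≤ 1
  have htri : ∀ k, ‖w k - ubar‖ ≤ 1 →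
      ‖y k - z0‖ ≤ ‖y k - w k‖ + M1 ∧ ‖y k‖ ≤ ‖y k - w k‖ + M2 ∧ ‖z0 - w k‖ ≤ M1 := by
    intro k hwk
    have t1 : ‖w k - z0‖ ≤ ‖w k - ubar‖ + ‖ubar - z0‖ := by
      have he : w k - z0 = (w k - ubar) + (ubar - z0) := by abel
      rw [he]; exact norm_add_le _ _
    have t2 : ‖y k - z0‖ ≤ ‖y k - w k‖ + ‖w k - z0‖ := by
      have he : y k - z0 = (y k - w k) + (w k - z0) := by abel
      rw [he]; exact norm_add_le _ _
    have t3 : ‖y k‖ ≤ ‖y k - w k‖ + ‖w k‖ := by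
      have he : y k = (y k - w k) + w k := by abel
      nth_rewrite 1 [he]; exact norm_add_le _ _
    have t4 : ‖w k‖ ≤ ‖w k - ubar‖ + ‖ubar‖ := by
      have he : w k = (w k - ubar) + ubar := by abel
      nth_rewrite 1 [he]; exact norm_add_le _ _
    have t5 : ‖z0 - w k‖ = ‖w k - z0‖ := norm_sub_rev _ _
    refine ⟨by rw [hM1]; linarith, by rw [hM2]; linarith, by rw [hM1, t5]; linarith⟩
  -- Phase A : eventual boundedness
  obtain ⟨R, hR0, hRev⟩ : ∃ R : ℝ, 0 ≤ R ∧ ∀ᶠ k in atTop, ‖y k - w k‖ ≤ R := by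
    obtain ⟨ε1, hε1pos, hε1K, hε1ρ, hε1B⟩ : ∃ ε1 : ℝ, 0 < ε1 ∧ ε1 * K ≤ 1/2 ∧
        ε1 * ρ ≤ 1/2 ∧ ε1 * |B0| ≤ 1/2 := by
      have hden : (0:ℝ) < 1 + ρ + K + |B0| := by positivity
      refine ⟨1 / (2 * (1 + ρ + K + |B0|)), by positivity, ?_, ?_, ?_⟩ <;>
      · rw [div_mul_eq_mul_div, one_mul, div_le_div_iff₀ (by positivity) two_pos]
        nlinarith [abs_nonneg B0]
    refine ⟨(2*M1^2 + 4 + 2*M1 + M2^2) + (2 + 2*M2) + 1, by nlinarith [sq_nonneg M1, sq_nonneg M2], ?_⟩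
    filter_upwards [hγsmall ε1 hε1pos, hwsmall 1 one_pos] with k hγk hwk
    obtain ⟨A, hA, hineq⟩ := hkey k z0 B0 hB0
    obtain ⟨e3, e4, e5⟩ := htri k hwk.le
    have hs := norm_nonneg (y k - w k)
    have e2 := hminor (y k) A hA
    have e7 : -A ≤ K * (1 + ‖y k - z0‖) + ρ / 2 * ‖y k‖ ^ 2 := by linarith
    have e8 : K * (1 + ‖y k - z0‖) ≤ K * (1 + (‖y k - w k‖ + M1)) :=
      mul_le_mul_of_nonneg_left (by linarith) hK0
    have e9 : ρ / 2 * ‖y k‖ ^ 2 ≤ ρ / 2 * (‖y k - w k‖ + M2) ^ 2 := by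
      have h6 : ‖y k‖ ^ 2 ≤ (‖y k - w k‖ + M2) ^ 2 := by
        nlinarith [norm_nonneg (y k)]
      exact mul_le_mul_of_nonneg_left h6 (by positivity)
    have e10 : B0 - A ≤ |B0| + K * (1 + (‖y k - w k‖ + M1)) + ρ / 2 * (‖y k - w k‖ + M2) ^ 2 := by
      linarith [le_abs_self B0]
    have e11 := mul_le_mul_of_nonneg_left e10 (by linarith [hγpos k] : (0:ℝ) ≤ 2 * γ k)
    have p1 : γ k * |B0| ≤ 1/2 :=
      (mul_le_mul_of_nonneg_right hγk.le (abs_nonneg B0)).trans hε1B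
    have p2 : γ k * K ≤ 1/2 := (mul_le_mul_of_nonneg_right hγk.le hK0).trans hε1K
    have p3 : γ k * ρ ≤ 1/2 := (mul_le_mul_of_nonneg_right hγk.le hρ).trans hε1ρ
    have q2 : γ k * K * (1 + (‖y k - w k‖ + M1)) ≤ 1/2 * (1 + (‖y k - w k‖ + M1)) :=
      mul_le_mul_of_nonneg_right p2 (by linarith)
    have q3 : γ k * ρ * (‖y k - w k‖ + M2) ^ 2 ≤ 1/2 * (‖y k - w k‖ + M2) ^ 2 :=
      mul_le_mul_of_nonneg_right p3 (sq_nonneg _)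
    have e12 : ‖z0 - w k‖ ^ 2 ≤ M1 ^ 2 := pow_le_pow_left₀ (norm_nonneg _) e5 2
    have e13 : ‖y k - w k‖ ^ 2 ≤ (2*M1^2 + 4 + 2*M1 + M2^2) + (2 + 2*M2) * ‖y k - w k‖ := by
      nlinarith [hineq, e11, p1, q2, q3, e12]
    exact self_le_of_sq_le hs (by nlinarith [sq_nonneg M1, sq_nonneg M2]) (by linarith) e13
  -- Phase B : asymptotic distance estimate
  have hlim : ∀ z : E, g z ≠ ⊤ → ∀ ε : ℝ, 0 < ε →
      ∀ᶠ k in atTop, ‖y k - ubar‖ ≤ ‖z - ubar‖ + ε := by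
    intro z hz ε hε
    obtain ⟨B, hB⟩ := ereal_eq_coe (hgbot z) hz
    obtain ⟨C2, hC2pos, hC2⟩ : ∃ C2 : ℝ, 0 < C2 ∧
        |B| + K * (1 + (R + M1)) + ρ / 2 * (R + M2) ^ 2 ≤ C2 := by
      refine ⟨|B| + K * (1 + (R + M1)) + ρ / 2 * (R + M2) ^ 2 + 1, ?_, by linarith⟩
      nlinarith [abs_nonneg B, mul_nonneg hK0 (by linarith : (0:ℝ) ≤ 1 + (R + M1)),
        mul_nonneg (by linarith : (0:ℝ) ≤ ρ / 2) (sq_nonneg (R + M2))]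
    filter_upwards [hRev, hγsmall (ε^2 / (4 * C2)) (by positivity),
      hwsmall (min 1 (ε/4)) (by positivity)] with k hRk hγk hwk
    have hw1 : ‖w k - ubar‖ ≤ 1 := (lt_min_iff.1 hwk).1.le
    have hw4 : ‖w k - ubar‖ ≤ ε/4 := (lt_min_iff.1 hwk).2.le
    obtain ⟨A, hA, hineq⟩ := hkey k z B hB
    obtain ⟨e3, e4, _⟩ := htri k hw1
    have e2 := hminor (y k) A hA
    have e8 : K * (1 + ‖y k - z0‖) ≤ K * (1 + (R + M1)) :=
      mul_le_mul_of_nonneg_left (by linarith) hK0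
    have e9 : ρ / 2 * ‖y k‖ ^ 2 ≤ ρ / 2 * (R + M2) ^ 2 := by
      have h6 : ‖y k‖ ^ 2 ≤ (R + M2) ^ 2 := by nlinarith [norm_nonneg (y k)]
      exact mul_le_mul_of_nonneg_left h6 (by positivity)
    have e10 : B - A ≤ C2 := by linarith [le_abs_self B]
    have e11 : 2 * γ k * (B - A) ≤ ε^2 / 2 := by
      have h5 : 2 * γ k * (B - A) ≤ 2 * γ k * C2 :=
        mul_le_mul_of_nonneg_left e10 (by linarith [hγpos k])
      have h6 : γ k * C2 ≤ (ε^2 / (4 * C2)) * C2 :=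
        mul_le_mul_of_nonneg_right hγk.le hC2pos.le
      have h7 : (ε^2 / (4 * C2)) * C2 = ε^2 / 4 := by field_simp
      linarith
    have e12 : ‖z - w k‖ ≤ ‖z - ubar‖ + ε/4 := by
      have he : z - w k = (z - ubar) + (ubar - w k) := by abel
      have := norm_add_le (z - ubar) (ubar - w k)
      rw [← he, norm_sub_rev ubar (w k)] at this
      linarith
    have e13 : ‖y k - w k‖ ^ 2 ≤ (‖z - ubar‖ + 3*ε/4) ^ 2 := by
      nlinarith [hineq, e11, e12, norm_nonneg (z - ubar), norm_nonneg (z - w k), hε]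
    have e14 : ‖y k - w k‖ ≤ ‖z - ubar‖ + 3*ε/4 := by
      nlinarith [norm_nonneg (y k - w k), norm_nonneg (z - ubar), hε]
    have e15 : ‖y k - ubar‖ ≤ ‖y k - w k‖ + ‖w k - ubar‖ := by
      have he : y k - ubar = (y k - w k) + (w k - ubar) := by abel
      rw [he]; exact norm_add_le _ _
    linarith
  -- the projection point
  have hclconv : Convex ℝ (closure {x : E | g x ≠ ⊤}) := hDconv.closure
  have hclne : (closure {x : E | g x ≠ ⊤}).Nonempty := ⟨z0, subset_closure hz0D⟩
  obtain ⟨p, hpcl, hpmin⟩ := exists_norm_eq_iInf_of_complete_convex hclne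
    isClosed_closure.isComplete hclconv ubar
  haveI : Nonempty (closure {x : E | g x ≠ ⊤}) := hclne.to_subtype
  have hp : ∀ v ∈ closure {x : E | g x ≠ ⊤}, ‖ubar - p‖ ≤ ‖ubar - v‖ := by
    intro v hv
    rw [hpmin]
    exact ciInf_le ⟨0, by rintro r ⟨v', rfl⟩; exact norm_nonneg _⟩
      (⟨v, hv⟩ : closure {x : E | g x ≠ ⊤})
  have hlimp : ∀ ε : ℝ, 0 < ε → ∀ᶠ k in atTop, ‖y k - ubar‖ ≤ ‖ubar - p‖ + ε := by
    intro ε hε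
    obtain ⟨z, hzD, hzp⟩ := Metric.mem_closure_iff.1 hpcl (ε/2) (by positivity)
    have h1 : ‖z - ubar‖ ≤ ‖ubar - p‖ + ε/2 := by
      have he : z - ubar = -((ubar - p) + (p - z)) := by abel
      have h2 := norm_add_le (ubar - p) (p - z)
      rw [← norm_neg, ← he] at h2
      have h3 : ‖p - z‖ < ε/2 := by rwa [← dist_eq_norm]
      linarith
    filter_upwards [hlim z hzD (ε/2) (by positivity)] with k hk
    linarith
  refine ⟨p, hpcl, hp, ?_⟩
  by_contra hcon
  rw [Metric.tendsto_atTop] at hcon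
  push_neg at hcon
  obtain ⟨ε, hε, hfar⟩ := hcon
  obtain ⟨φ, hφ, hφfar⟩ := Filter.extraction_of_frequently_atTop
    (Filter.frequently_atTop.2 hfar)
  obtain ⟨N0, hN0⟩ := Filter.eventually_atTop.1 (hlimp 1 one_pos)
  obtain ⟨X, hXdef⟩ : ∃ X : ℕ → E, X = fun j => y (φ (j + N0)) := ⟨_, rfl⟩
  have hball : ∀ j : ℕ, X j ∈ Metric.closedBall ubar (‖ubar - p‖ + 1) := by
    intro j
    rw [hXdef, Metric.mem_closedBall, dist_eq_norm]
    exact hN0 _ (le_trans (Nat.le_add_left N0 j) hφ.le_apply)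
  obtain ⟨q, hqball, ψ, hψ, hqlim⟩ :=
    (isCompact_closedBall ubar (‖ubar - p‖ + 1)).tendsto_subseq hball
  have hqD : q ∈ closure {x : E | g x ≠ ⊤} := by
    apply mem_closure_of_tendsto hqlim
    filter_upwards with j
    rw [Function.comp_apply, hXdef]
    exact hyD _
  have hqle : ‖ubar - q‖ ≤ ‖ubar - p‖ := by
    apply le_of_forall_pos_le_add
    intro ε' hε'
    obtain ⟨N1, hN1⟩ := Filter.eventually_atTop.1 (hlimp ε' hε')
    have hnt : Tendsto (fun j => ‖ubar - (X ∘ ψ) j‖) atTop (nhds ‖ubar - q‖) :=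
      (tendsto_const_nhds.sub hqlim).norm
    apply le_of_tendsto hnt
    filter_upwards [Filter.eventually_ge_atTop N1] with j hj
    rw [Function.comp_apply, hXdef, norm_sub_rev]
    refine hN1 _ ?_
    calc N1 ≤ j := hj
      _ ≤ ψ j := hψ.le_apply
      _ ≤ ψ j + N0 := Nat.le_add_right _ _
      _ ≤ φ (ψ j + N0) := hφ.le_apply
  have hqeq : ‖ubar - q‖ = ‖ubar - p‖ := le_antisymm hqle (hp q hqD)
  have hqp : q = p := by
    have hm : (1/2 : ℝ) • p + (1/2 : ℝ) • q ∈ closure {x : E | g x ≠ ⊤} :=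
      hclconv hpcl hqD (by norm_num) (by norm_num) (by norm_num)
    have hmle := hp _ hm
    have par := parallelogram_law_with_norm ℝ (ubar - p) (ubar - q)
    have h1 : (ubar - p) + (ubar - q) = (2:ℝ) • (ubar - ((1/2 : ℝ) • p + (1/2 : ℝ) • q)) := by
      module
    have h2 : (ubar - p) - (ubar - q) = q - p := by abel
    rw [h1, h2, norm_smul, Real.norm_ofNat] at par
    have hz : ‖q - p‖ = 0 := by
      nlinarith [norm_nonneg (q - p), norm_nonneg (ubar - ((1/2 : ℝ) • p + (1/2 : ℝ) • q)),
        norm_nonneg (ubar - p)]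
    have := norm_eq_zero.1 hz
    exact eq_of_sub_eq_zero this
  rw [hqp] at hqlim
  obtain ⟨N2, hN2⟩ := Metric.tendsto_atTop.1 hqlim ε hε
  have hcontra := hφfar (ψ N2 + N0)
  have := hN2 N2 le_rfl
  rw [Function.comp_apply, hXdef] at this
  linarith
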